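/- There exist two trees G₁ and G₂ on the same 5-element vertex set such that no 2-partition f of the vertex set satisfies b_f(γ_{G_i}(v)) ≤ 1 for all vertices v and both i ∈ {1,2}. Concretely, take V = {v₁,...,v₅}, G₁ the path v₁v₂v₃v₄v₅ and G₂ the path v₃v₂v₁v₅v₄. -/

import Mathlib

open scoped Classical

noncomputable def bal {α : Type*} (f : α → Fin 2) (S : Finset α) : ℕ :=
  (((S.filter fun x => f x = 1).card : ℤ) - ((S.filter fun x => f x = 0).card : ℤ)).natAbs

noncomputable def G₁ : SimpleGraph (Fin 5) :=
  SimpleGraph.fromEdgeSet {s(0,1), s(1,2), s(2,3), s(3,4)}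

noncomputable def G₂ : SimpleGraph (Fin 5) :=
  SimpleGraph.fromEdgeSet {s(0,4), s(4,3), s(2,1), s(1,0)}

def H₁ : SimpleGraph (Fin 5) where
  Adj a b := a.val + 1 = b.val ∨ b.val + 1 = a.val
  symm := ⟨fun _ _ h => h.symm⟩
  loopless := ⟨fun a h => by omega⟩

def H₂ : SimpleGraph (Fin 5) where
  Adj a b := ((a = 0 ∧ b = 4) ∨ (a = 4 ∧ b = 3) ∨ (a = 2 ∧ b = 1) ∨ (a = 1 ∧ b = 0)) ∨
    ((b = 0 ∧ a = 4) ∨ (b = 4 ∧ a = 3) ∨ (b = 2 ∧ a = 1) ∨ (b = 1 ∧ a = 0))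
  symm := ⟨fun _ _ h => h.symm⟩
  loopless := ⟨fun a h => by fin_cases a <;> simp_all⟩

instance : DecidableRel H₁.Adj := fun a b =>
  inferInstanceAs (Decidable (a.val + 1 = b.val ∨ b.val + 1 = a.val))

instance : DecidableRel H₂.Adj := fun a b =>
  inferInstanceAs (Decidable (((a = 0 ∧ b = 4) ∨ (a = 4 ∧ b = 3) ∨ (a = 2 ∧ b = 1) ∨ (a = 1 ∧ b = 0)) ∨
    ((b = 0 ∧ a = 4) ∨ (b = 4 ∧ a = 3) ∨ (b = 2 ∧ a = 1) ∨ (b = 1 ∧ a = 0))))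

lemma hG1 : G₁ = H₁ := by
  ext a b
  simp only [G₁, SimpleGraph.fromEdgeSet_adj, Set.mem_insert_iff, Set.mem_singleton_iff,
    Sym2.eq_iff]
  show _ ↔ (a.val + 1 = b.val ∨ b.val + 1 = a.val)
  fin_cases a <;> fin_cases b <;> simp <;> decide

lemma hG2 : G₂ = H₂ := by
  ext a b
  simp only [G₂, SimpleGraph.fromEdgeSet_adj, Set.mem_insert_iff, Set.mem_singleton_iff,
    Sym2.eq_iff]
  show _ ↔ H₂.Adj a b
  unfold H₂
  fin_cases a <;> fin_cases b <;> simp <;> decide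

lemma hc1 : H₁.Connected := by
  rw [SimpleGraph.connected_iff]
  exact ⟨by decide, ⟨0⟩⟩
lemma hc2 : H₂.Connected := by
  rw [SimpleGraph.connected_iff]
  exact ⟨by decide, ⟨0⟩⟩

def Del (H : SimpleGraph (Fin 5)) (u v : Fin 5) : SimpleGraph (Fin 5) where
  Adj a b := H.Adj a b ∧ ¬((a = u ∧ b = v) ∨ (a = v ∧ b = u))
  symm := ⟨fun a b h => ⟨H.adj_symm h.1, by tauto⟩⟩
  loopless := ⟨fun a h => H.loopless.irrefl a h.1⟩

instance (H : SimpleGraph (Fin 5)) (u v : Fin 5) [DecidableRel H.Adj] :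
    DecidableRel (Del H u v).Adj := fun a b =>
  inferInstanceAs (Decidable (H.Adj a b ∧ ¬((a = u ∧ b = v) ∨ (a = v ∧ b = u))))

lemma del_eq (H : SimpleGraph (Fin 5)) (u v : Fin 5) :
    H \ SimpleGraph.fromEdgeSet {s(u, v)} = Del H u v := by
  ext a b
  simp only [SimpleGraph.sdiff_adj, SimpleGraph.fromEdgeSet_adj, Set.mem_singleton_iff,
    Sym2.eq_iff, Del]
  constructor
  · rintro ⟨h1, h2⟩
    exact ⟨h1, by have := h1.ne; tauto⟩
  · rintro ⟨h1, h2⟩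
    exact ⟨h1, by have := h1.ne; tauto⟩

lemma ha1 : H₁.IsAcyclic := by
  rw [SimpleGraph.isAcyclic_iff_forall_adj_isBridge]
  intro v w h
  rw [SimpleGraph.isBridge_iff]
  unfold SimpleGraph.deleteEdges
  rw [del_eq]
  revert h
  fin_cases v <;> fin_cases w <;> decide

lemma ha2 : H₂.IsAcyclic := by
  rw [SimpleGraph.isAcyclic_iff_forall_adj_isBridge]
  intro v w h
  rw [SimpleGraph.isBridge_iff]
  unfold SimpleGraph.deleteEdges
  rw [del_eq]
  revert h
  fin_cases v <;> fin_cases w <;> decide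

def N₁ : Fin 5 → Finset (Fin 5) := ![{1}, {0,2}, {1,3}, {2,4}, {3}]
def N₂ : Fin 5 → Finset (Fin 5) := ![{1,4}, {0,2}, {1}, {4}, {0,3}]

lemma nbr1 (v : Fin 5) : G₁.neighborFinset v = N₁ v := by
  ext a
  rw [SimpleGraph.mem_neighborFinset, hG1]
  fin_cases v <;> fin_cases a <;> decide

lemma nbr2 (v : Fin 5) : G₂.neighborFinset v = N₂ v := by
  ext a
  rw [SimpleGraph.mem_neighborFinset, hG2]
  fin_cases v <;> fin_cases a <;> decide

lemma key : ∀ f : Fin 5 → Fin 2, ∃ v : Fin 5, 2 ≤ bal f (N₁ v) ∨ 2 ≤ bal f (N₂ v) := by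
  decide

/-- The two specific paths `v₁v₂v₃v₄v₅` and `v₃v₂v₁v₅v₄` are trees on the same 5
vertices admitting no simultaneous 1-locally-balanced 2-partition. -/
theorem no_one_locally_balanced :
    G₁.Connected ∧ G₁.IsAcyclic ∧ G₂.Connected ∧ G₂.IsAcyclic ∧
    ∀ f : Fin 5 → Fin 2, ∃ v : Fin 5,
      2 ≤ bal f (G₁.neighborFinset v) ∨ 2 ≤ bal f (G₂.neighborFinset v) := by
  refine ⟨hG1 ▸ hc1, hG1 ▸ ha1, hG2 ▸ hc2, hG2 ▸ ha2, ?_⟩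
  intro f
  obtain ⟨v, hv⟩ := key f
  exact ⟨v, by rw [nbr1, nbr2]; exact hv⟩
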